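/- In the symmetric group S_n ordered lexicographically as words, assign to each permutation σ its decomposition into wheels: an entry is an axle if it is the largest entry so far, and each wheel consists of an axle together with the subsequent smaller entries before the next axle. Then the permutation obtained from any ordered-block symbol f by arranging all wheels of f (across all blocks) in ascending order of axle equals the lexicographically least shuffle of f (a shuffle being a permutation preserving the relative order within each block of f). -/

import Mathlib

/-- The decomposition of a block (an ordered list) into *wheels*: an entry is an axle if
it is the largest entry so far, and a wheel consists of an axle together with the
subsequent smaller entries before the next axle. -/
def wheels : List ℕ → List (List ℕ)
  | [] => []
  | x :: l => (x :: l.takeWhile (· < x)) :: wheels (l.dropWhile (· < x))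
termination_by l => l.length
decreasing_by
  exact Nat.lt_succ_of_le (List.dropWhile_sublist _).length_le

/-- `l` is a shuffle of the symbol `f`: a permutation of all the entries of `f` preserving
the relative order within each block. -/
def IsShuffle (f : List (List ℕ)) (l : List ℕ) : Prop :=
  l.Perm f.flatten ∧ ∀ b ∈ f, b.Sublist l

theorem wheels_nil : wheels [] = [] := by rw [wheels]

theorem wheels_cons (x : ℕ) (l : List ℕ) :
    wheels (x :: l) = (x :: l.takeWhile (· < x)) :: wheels (l.dropWhile (· < x)) := by
  rw [wheels]

theorem wheels_headI_ge : ∀ (b : List ℕ), ∀ w ∈ wheels b, b.headI ≤ w.headI := by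
  intro b
  induction b using wheels.induct with
  | case1 => simp [wheels_nil]
  | case2 x l ih =>
    rw [wheels_cons]
    intro w hw
    rcases List.mem_cons.mp hw with rfl | hw
    · simp
    · rcases hd : l.dropWhile (· < x) with _ | ⟨y, d⟩
      · rw [hd] at hw; simp [wheels_nil] at hw
      · have h1 := List.head_dropWhile_not (· < x) (l := l) (by rw [hd]; simp)
        rw [hd] at hw
        simp only [hd] at h1
        simp at h1
        replace h1 : x ≤ y := Nat.le_of_not_lt (of_decide_eq_false h1)
        have := ih w (by rw [hd]; exact hw)
        rw [hd] at this
        simp at this ⊢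
        omega

theorem sublist_head_eq {s r' : List ℕ} {y : ℕ} (hs : s.Sublist (y :: r')) (hy : y ∈ s)
    (hnr : y ∉ r') : ∃ s', s = y :: s' := by
  cases hs with
  | cons _ h => exact absurd (h.mem hy) hnr
  | cons_cons _ h => exact ⟨_, rfl⟩

theorem sublist_of_cons_of_not_mem {c r' : List ℕ} {y : ℕ} (hc : c.Sublist (y :: r'))
    (hy : y ∉ c) : c.Sublist r' := by
  cases hc with
  | cons _ h => exact h
  | cons_cons _ h => exact absurd (List.mem_cons_self) hy

theorem lex_append_left (u : List ℕ) {v w : List ℕ} (h : List.Lex (· < ·) v w) :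
    List.Lex (· < ·) (u ++ v) (u ++ w) := by
  induction u with
  | nil => exact h
  | cons a u ih => exact List.Lex.cons ih

theorem peel (a0 : ℕ) (b' : List ℕ) (os : List (List ℕ))
    (hhead : ∀ c ∈ os, c ≠ [] → a0 < c.headI)
    (hdisj : ∀ z ∈ b', ∀ c ∈ os, z ∉ c) :
    ∀ (t r : List ℕ),
      (∀ z ∈ t, z < a0) →
      (∀ z ∈ t, ∀ c ∈ os, z ∉ c) →
      (t ++ b').Sublist r →
      (∀ c ∈ os, c.Sublist r) →
      r.Perm (t ++ b' ++ os.flatten) →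
      r.Nodup →
      (∃ r'', r = t ++ r'' ∧ r''.Perm (b' ++ os.flatten) ∧ b'.Sublist r'' ∧
        ∀ c ∈ os, c.Sublist r'') ∨
      ∀ V, List.Lex (· < ·) (t ++ V) r := by
  intro t
  induction t with
  | nil =>
    intro r _ _ hA hB hC _
    exact Or.inl ⟨r, rfl, by simpa using hC, by simpa using hA, hB⟩
  | cons z t' ih =>
    intro r ht htdisj hA hB hC hnd
    obtain ⟨y, r', rfl⟩ : ∃ y r', r = y :: r' := by
      cases r with
      | nil => exact absurd hA (by simp)
      | cons y r' => exact ⟨y, r', rfl⟩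
    have hynr' : y ∉ r' := (List.nodup_cons.mp hnd).1
    by_cases hyz : y = z
    · subst hyz
      have hA' : (t' ++ b').Sublist r' := by
        rw [List.cons_append] at hA
        exact List.cons_sublist_cons.mp hA
      have hB' : ∀ c ∈ os, c.Sublist r' := fun c hc =>
        sublist_of_cons_of_not_mem (hB c hc)
          (fun hzc => htdisj y (List.mem_cons_self) c hc hzc)
      have hC' : r'.Perm (t' ++ b' ++ os.flatten) := by
        have : (y :: r').Perm (y :: (t' ++ b' ++ os.flatten)) := by
          simpa using hC
        exact this.cons_inv
      rcases ih r' (fun z hz => ht z (List.mem_cons_of_mem _ hz))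
          (fun z hz => htdisj z (List.mem_cons_of_mem _ hz)) hA' hB' hC'
          (List.nodup_cons.mp hnd).2 with ⟨r'', hr, h1, h2, h3⟩ | h
      · exact Or.inl ⟨r'', by rw [List.cons_append, hr], h1, h2, h3⟩
      · exact Or.inr fun V => by
          rw [List.cons_append]
          exact List.Lex.cons (h V)
    · have hyr : y ∈ t'.cons z ++ b' ++ os.flatten := hC.subset (List.mem_cons_self)
      rcases List.mem_append.mp hyr with hy1 | hy2
      · obtain ⟨s', hs'⟩ := sublist_head_eq hA hy1 hynr'
        rw [List.cons_append] at hs'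
        exact absurd (List.head_eq_of_cons_eq hs').symm hyz
      · obtain ⟨c, hc, hyc⟩ := List.mem_flatten.mp hy2
        obtain ⟨s', hs'⟩ := sublist_head_eq (hB c hc) hyc hynr'
        have hcy : a0 < y := by
          have := hhead c hc (by rw [hs']; simp)
          rwa [hs'] at this
        refine Or.inr fun V => ?_
        rw [List.cons_append]
        exact List.Lex.rel (lt_trans (ht z (List.mem_cons_self)) hcy)

theorem main_empty (f : List (List ℕ)) (hfe : f.flatten = [])
    (W : List (List ℕ)) (hperm : W.Perm (f.map wheels).flatten) :
    (W.flatten.Perm f.flatten ∧ ∀ b ∈ f, b.Sublist W.flatten) ∧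
      ∀ l : List ℕ, l.Perm f.flatten → (∀ b ∈ f, b.Sublist l) →
        W.flatten = l ∨ List.Lex (· < ·) W.flatten l := by
  have hbnil : ∀ b ∈ f, b = [] := by
    intro b hb
    rw [List.eq_nil_iff_forall_not_mem]
    intro x hx
    have : x ∈ f.flatten := List.mem_flatten.mpr ⟨b, hb, hx⟩
    simp [hfe] at this
  have hmw : (f.map wheels).flatten = [] := by
    rw [List.eq_nil_iff_forall_not_mem]
    intro w hw
    obtain ⟨wb, hwb, hwwb⟩ := List.mem_flatten.mp hw
    obtain ⟨b, hb, rfl⟩ := List.mem_map.mp hwb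
    rw [hbnil b hb, wheels_nil] at hwwb
    simp at hwwb
  rw [hmw] at hperm
  have hW : W = [] := hperm.eq_nil
  subst hW
  refine ⟨⟨by rw [hfe]; rfl, fun b hb => by rw [hbnil b hb]; simp⟩, fun l hl _ => ?_⟩
  rw [hfe] at hl
  exact Or.inl (hl.eq_nil).symm

theorem perm_rotate (u v w : List ℕ) : (u ++ (v ++ w)).Perm (v ++ (u ++ w)) := by
  have := (List.perm_append_comm (l₁ := u) (l₂ := v)).append_right w
  simpa [List.append_assoc] using this

theorem main_lemma : ∀ (n : ℕ) (f : List (List ℕ)), f.flatten.length ≤ n → f.flatten.Nodup →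
    ∀ W : List (List ℕ), W.Perm (f.map wheels).flatten →
      W.Pairwise (fun u v => u.headI < v.headI) →
      (W.flatten.Perm f.flatten ∧ ∀ b ∈ f, b.Sublist W.flatten) ∧
        ∀ l : List ℕ, l.Perm f.flatten → (∀ b ∈ f, b.Sublist l) →
          W.flatten = l ∨ List.Lex (· < ·) W.flatten l := by
  intro n
  induction n with
  | zero =>
    intro f hlen hnd W hperm _
    exact main_empty f (List.eq_nil_of_length_eq_zero (Nat.le_zero.mp hlen)) W hperm
  | succ m ih =>
    intro f hlen hnd W hperm hsorted
    by_cases hfe : f.flatten = []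
    · exact main_empty f hfe W hperm
    obtain ⟨w0, W', rfl⟩ : ∃ w0 W', W = w0 :: W' := by
      cases W with
      | nil =>
        exfalso
        obtain ⟨x0, hx0⟩ := List.exists_mem_of_ne_nil _ hfe
        obtain ⟨b0, hb0, hx0b⟩ := List.mem_flatten.mp hx0
        obtain ⟨z0, lb0, rfl⟩ : ∃ z0 lb0, b0 = z0 :: lb0 := by
          cases b0 with
          | nil => simp at hx0b
          | cons a b => exact ⟨a, b, rfl⟩
        have hmem : (z0 :: lb0.takeWhile (· < z0)) ∈ (f.map wheels).flatten :=
          List.mem_flatten.mpr ⟨wheels (z0 :: lb0), List.mem_map_of_mem hb0,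
            by rw [wheels_cons]; exact List.mem_cons_self⟩
        have := hperm.symm.subset hmem
        simp at this
      | cons w0 W' => exact ⟨_, _, rfl⟩
    obtain ⟨hs1, hs2⟩ := List.pairwise_cons.mp hsorted
    obtain ⟨wb, hwb, hw0wb⟩ := List.mem_flatten.mp (hperm.subset (List.mem_cons_self))
    obtain ⟨b, hbf, rfl⟩ := List.mem_map.mp hwb
    obtain ⟨x, lb, rfl⟩ : ∃ x lb, b = x :: lb := by
      cases b with
      | nil => rw [wheels_nil] at hw0wb; simp at hw0wb
      | cons a c => exact ⟨a, c, rfl⟩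
    obtain ⟨p, q, rfl⟩ := List.append_of_mem hbf
    set tk := lb.takeWhile (· < x) with htk
    set dk := lb.dropWhile (· < x) with hdk
    -- w0 is the first wheel of its block
    have hw1W : (x :: tk) ∈ w0 :: W' := hperm.symm.subset
      (List.mem_flatten.mpr ⟨wheels (x :: lb), List.mem_map_of_mem hbf,
        by rw [wheels_cons, ← htk]; exact List.mem_cons_self⟩)
    have hw0 : w0 = x :: tk := by
      rcases List.mem_cons.mp hw1W with h1 | h1
      · exact h1.symm
      · exfalso
        have h2 := hs1 _ h1
        have h3 := wheels_headI_ge (x :: lb) w0 hw0wb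
        simp at h2 h3
        omega
    subst hw0
    -- disjointness of blocks
    have hblocknd := (List.nodup_flatten.mp hnd).1
    have hpw := (List.nodup_flatten.mp hnd).2
    rw [List.pairwise_append] at hpw
    obtain ⟨_, hq, hpq⟩ := hpw
    rw [List.pairwise_cons] at hq
    have hdisjbc : ∀ c ∈ p ++ q, ∀ z ∈ (x :: lb), z ∉ c := by
      intro c hc z hz hzc
      rcases List.mem_append.mp hc with h | h
      · exact hpq c h _ (List.mem_cons_self) hzc hz
      · exact hq.1 c h hz hzc
    have hmempq : ∀ c ∈ p ++ q, c ∈ p ++ (x :: lb) :: q := by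
      intro c hc
      rcases List.mem_append.mp hc with h | h
      · exact List.mem_append.mpr (Or.inl h)
      · exact List.mem_append.mpr (Or.inr (List.mem_cons_of_mem _ h))
    -- heads of other blocks exceed x
    have hhead : ∀ c ∈ p ++ q, c ≠ [] → x < c.headI := by
      intro c hc hcne
      obtain ⟨y, lc, rfl⟩ : ∃ y lc, c = y :: lc := by
        cases c with
        | nil => exact absurd rfl hcne
        | cons a d => exact ⟨a, d, rfl⟩
      have hwc : (y :: lc.takeWhile (· < y)) ∈ (x :: tk) :: W' := hperm.symm.subset
        (List.mem_flatten.mpr ⟨wheels (y :: lc), List.mem_map_of_mem (hmempq _ hc),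
          by rw [wheels_cons]; exact List.mem_cons_self⟩)
      rcases List.mem_cons.mp hwc with h1 | h1
      · exfalso
        have hyx : y = x := List.head_eq_of_cons_eq h1
        exact hdisjbc _ hc x (List.mem_cons_self)
          (by rw [← hyx]; exact List.mem_cons_self)
      · have := hs1 _ h1
        simpa using this
    have hsplit : x :: lb = (x :: tk) ++ dk := by
      rw [htk, hdk]
      simp [List.takeWhile_append_dropWhile]
    -- permutation bookkeeping
    have key1 : ((p ++ (x :: lb) :: q).map wheels).flatten.Perm
        ((x :: tk) :: ((p ++ dk :: q).map wheels).flatten) := by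
      simp only [List.map_append, List.map_cons, List.flatten_append, List.flatten_cons,
        wheels_cons, ← htk, ← hdk]
      have := List.perm_middle (a := x :: tk)
        (l₁ := (p.map wheels).flatten)
        (l₂ := wheels dk ++ (q.map wheels).flatten)
      simpa [List.append_assoc] using this
    have key2 : (p ++ (x :: lb) :: q).flatten.Perm
        ((x :: tk) ++ (p ++ dk :: q).flatten) := by
      simp only [List.flatten_append, List.flatten_cons, hsplit, List.append_assoc]
      exact perm_rotate p.flatten (x :: tk) (dk ++ q.flatten)
    have hsubg : (p ++ dk :: q).flatten.Sublist (p ++ (x :: lb) :: q).flatten := by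
      simp only [List.flatten_append, List.flatten_cons]
      refine List.Sublist.append (List.Sublist.refl _) ?_
      refine List.Sublist.append ?_ (List.Sublist.refl _)
      rw [hsplit]
      exact List.sublist_append_right _ _
    have gnodup : (p ++ dk :: q).flatten.Nodup := hsubg.nodup hnd
    have glen : (p ++ dk :: q).flatten.length ≤ m := by
      have h1 := key2.length_eq
      simp only [List.length_append, List.length_cons] at h1 hlen
      omega
    have hW' : W'.Perm ((p ++ dk :: q).map wheels).flatten := (hperm.trans key1).cons_inv
    obtain ⟨⟨ihperm, ihsub⟩, ihmin⟩ := ih (p ++ dk :: q) glen gnodup W' hW' hs2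
    have hWf : ((x :: tk) :: W').flatten = (x :: tk) ++ W'.flatten := rfl
    have ht : ∀ z ∈ tk, z < x := by
      intro z hz
      rw [htk] at hz
      simpa using List.mem_takeWhile_imp hz
    refine ⟨⟨?_, ?_⟩, ?_⟩
    · rw [hWf]
      exact (ihperm.append_left (x :: tk)).trans key2.symm
    · intro c hc
      rw [hWf]
      rcases List.mem_append.mp hc with h | h
      · exact (ihsub c (List.mem_append.mpr (Or.inl h))).trans (List.sublist_append_right _ _)
      · rcases List.mem_cons.mp h with rfl | h
        · rw [hsplit]
          exact (List.append_sublist_append_left _).mpr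
            (ihsub dk (List.mem_append.mpr (Or.inr (List.mem_cons_self))))
        · exact (ihsub c (List.mem_append.mpr (Or.inr (List.mem_cons_of_mem _ h)))).trans
            (List.sublist_append_right _ _)
    · intro l hlp hls
      have hlnd : l.Nodup := hlp.nodup_iff.mpr hnd
      obtain ⟨y, l', rfl⟩ : ∃ y l', l = y :: l' := by
        cases l with
        | nil => exact absurd hlp.symm.eq_nil hfe
        | cons y l' => exact ⟨_, _, rfl⟩
      have hynl' : y ∉ l' := (List.nodup_cons.mp hlnd).1
      obtain ⟨c0, hc0f, hyc0⟩ := List.mem_flatten.mp (hlp.subset (List.mem_cons_self))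
      obtain ⟨s0, hs0⟩ := sublist_head_eq (hls c0 hc0f) hyc0 hynl'
      have hcase_other : c0 ∈ p ++ q →
          List.Lex (· < ·) (((x :: tk) :: W').flatten) (y :: l') := by
        intro hc
        have hxy : x < y := by
          have := hhead c0 hc (by rw [hs0]; simp)
          rwa [hs0] at this
        rw [hWf, List.cons_append]
        exact List.Lex.rel hxy
      rcases List.mem_append.mp hc0f with hc0p | hc0r
      · exact Or.inr (hcase_other (List.mem_append.mpr (Or.inl hc0p)))
      rcases List.mem_cons.mp hc0r with hc0b | hc0q
      swap
      · exact Or.inr (hcase_other (List.mem_append.mpr (Or.inr hc0q)))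
      -- the head of l is x; peel off the first wheel
      have hyx : y = x := by
        rw [hc0b] at hs0
        exact (List.head_eq_of_cons_eq hs0).symm
      subst hyx
      have hA : (tk ++ dk).Sublist l' := by
        have hb := hls (y :: lb) (List.mem_append.mpr (Or.inr (List.mem_cons_self)))
        rw [hsplit, List.cons_append] at hb
        exact List.cons_sublist_cons.mp hb
      have hB : ∀ c ∈ p ++ q, c.Sublist l' := fun c hc =>
        sublist_of_cons_of_not_mem (hls c (hmempq c hc))
          (hdisjbc c hc y (List.mem_cons_self))
      have hgp : ((p ++ dk :: q).flatten).Perm (dk ++ (p ++ q).flatten) := by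
        simp only [List.flatten_append, List.flatten_cons, List.append_assoc]
        exact perm_rotate p.flatten dk q.flatten
      have hC : l'.Perm (tk ++ dk ++ (p ++ q).flatten) := by
        have h1 : (y :: l').Perm ((y :: tk) ++ (dk ++ (p ++ q).flatten)) :=
          hlp.trans (key2.trans ((hgp).append_left (y :: tk)))
        rw [List.cons_append] at h1
        simpa [List.append_assoc] using h1.cons_inv
      have htdisj : ∀ z ∈ tk, ∀ c ∈ p ++ q, z ∉ c := by
        intro z hz c hc
        refine hdisjbc c hc z (List.mem_cons_of_mem _ ?_)
        rw [htk] at hz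
        exact List.Sublist.mem hz (List.takeWhile_sublist _)
      have hbdisj : ∀ z ∈ dk, ∀ c ∈ p ++ q, z ∉ c := by
        intro z hz c hc
        refine hdisjbc c hc z (List.mem_cons_of_mem _ ?_)
        rw [hdk] at hz
        exact List.Sublist.mem hz (List.dropWhile_sublist _)
      have hnd' : l'.Nodup := (List.nodup_cons.mp hlnd).2
      rcases peel y dk (p ++ q) hhead hbdisj tk l' ht htdisj hA hB hC hnd' with
        ⟨r'', hr, hp'', hb'', hs''⟩ | hlex
      · have hr''g : r''.Perm (p ++ dk :: q).flatten := hp''.trans hgp.symm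
        have hr''s : ∀ c ∈ p ++ dk :: q, c.Sublist r'' := by
          intro c hc
          rcases List.mem_append.mp hc with h | h
          · exact hs'' c (List.mem_append.mpr (Or.inl h))
          · rcases List.mem_cons.mp h with rfl | h
            · exact hb''
            · exact hs'' c (List.mem_append.mpr (Or.inr h))
        rcases ihmin r'' hr''g hr''s with heq | hlex2
        · refine Or.inl ?_
          rw [hWf, hr, heq]
          simp [List.append_assoc]
        · refine Or.inr ?_
          rw [hWf, hr]
          have := lex_append_left (y :: tk) hlex2
          simpa [List.append_assoc] using this
      · refine Or.inr ?_
        rw [hWf, List.cons_append]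
        exact List.Lex.cons (hlex W'.flatten)

/-- for a symbol `f` (ordered sequence of nonempty internally ordered
blocks with distinct entries), the permutation obtained by arranging all the wheels of
`f` (across all blocks) in ascending order of axle is the lexicographically least shuffle
of `f`. -/
theorem sorted_wheels_is_lex_least_shuffle (f : List (List ℕ))
    (hne : ∀ b ∈ f, b ≠ []) (hnd : f.flatten.Nodup)
    (W : List (List ℕ)) (hperm : W.Perm (f.map wheels).flatten)
    (hsorted : W.Pairwise fun u v => u.headI < v.headI) :
    IsShuffle f W.flatten ∧
      ∀ l : List ℕ, IsShuffle f l → W.flatten = l ∨ List.Lex (· < ·) W.flatten l := by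
  obtain ⟨⟨h1, h2⟩, h3⟩ := main_lemma f.flatten.length f le_rfl hnd W hperm hsorted
  exact ⟨⟨h1, h2⟩, fun l hl => h3 l hl.1 hl.2⟩
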